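/- arXiv:1104.1668 — 3 statements merged into one kernel-verified Lean document; each statement's English description precedes it below -/
import Mathlib

section
/- Given g ∈ F (a function ℤ → {×, ∘} with finitely many ×'s) and a ∈ ℤ, there is at most one f ∈ F such that g is obtained from f by a legal move of weight zero starting at a. -/
namespace KacComb

/-- Core-free diagrams: functions from `ℤ` to `{×, ∘}`, with `true` = `×`. -/
abbrev F : Type := ℤ → Bool

/-- `tally f b c` = number of `×`'s minus number of `∘`'s of `f` strictly between `b` and `c`. -/
noncomputable def tally (f : F) (b c : ℤ) : ℤ :=
  (((Finset.Ioo b c).filter fun x => f x = true).card : ℤ) -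
    (((Finset.Ioo b c).filter fun x => f x = false).card : ℤ)

/-- `move f a b` = `f^a_b`: replace the `×` at `a` by `∘` and the `∘` at `b` by `×`. -/
def move (f : F) (a b : ℤ) : F :=
  Function.update (Function.update f a false) b true

/-- The move `f ↦ f^a_b` (start `a`, end `b`) is legal. -/
def IsLegal (f : F) (a b : ℤ) : Prop :=
  b < a ∧ f a = true ∧ f b = false ∧ ∀ c : ℤ, b < c → c ≤ a → 0 ≤ tally f b c

/-- `g` is obtained from `f` by a legal move with start `a` and end `b`. -/
def LegalMove (f g : F) (a b : ℤ) : Prop :=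
  IsLegal f a b ∧ g = move f a b

/-- The cap diagram of `g` has a cap beginning at `b` and ending at `a`. -/
def HasCap (g : F) (b a : ℤ) : Prop :=
  b < a ∧ g b = true ∧ g a = false ∧ tally g b a = 0 ∧
    ∀ c : ℤ, b < c → c ≤ a → 0 ≤ tally g b c

/-- The cap diagram of `g` matches the weight diagram of `f`. -/
def Matches (g f : F) : Prop :=
  (∀ b a : ℤ, HasCap g b a →
      (f b = true ∧ f a = false) ∨ (f b = false ∧ f a = true)) ∧
  ∀ x : ℤ, f x = true → ∃ b a : ℤ, HasCap g b a ∧ (x = b ∨ x = a)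

/-- `P(f)`: the set of `g` whose cap diagram matches the weight diagram of `f`. -/
def Pset (f : F) : Set F := {g | Matches g f}

lemma tally_eq_sum (f : F) (b c : ℤ) :
    tally f b c = ∑ x ∈ Finset.Ioo b c, (if f x = true then (1 : ℤ) else -1) := by
  rw [tally, ← Finset.sum_filter_add_sum_filter_not (Finset.Ioo b c) (fun x => f x = true)]
  have h1 : ∀ x ∈ (Finset.Ioo b c).filter (fun x => f x = true),
      (if f x = true then (1 : ℤ) else -1) = 1 := by
    intro x hx; simp [Finset.mem_filter.mp hx |>.2]
  have h2 : ∀ x ∈ (Finset.Ioo b c).filter (fun x => ¬ f x = true),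
      (if f x = true then (1 : ℤ) else -1) = -1 := by
    intro x hx; simp [Finset.mem_filter.mp hx |>.2]
  rw [Finset.sum_congr rfl h1, Finset.sum_congr rfl h2, Finset.sum_const, Finset.sum_const]
  have : ((Finset.Ioo b c).filter fun x => ¬ f x = true) =
      ((Finset.Ioo b c).filter fun x => f x = false) := by
    apply Finset.filter_congr; intro x _; simp
  rw [this]; push_cast; ring

lemma tally_split (f : F) {b m c : ℤ} (h1 : b < m) (h2 : m < c) :
    tally f b c = tally f b m + (if f m = true then 1 else -1) + tally f m c := by
  have hu : Finset.Ioo b m ∪ Finset.Ico m c = Finset.Ioo b c := by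
    ext x; simp only [Finset.mem_union, Finset.mem_Ioo, Finset.mem_Ico]; omega
  have hins : insert m (Finset.Ioo m c) = Finset.Ico m c := Finset.Ioo_insert_left h2
  have hdisj : Disjoint (Finset.Ioo b m) (Finset.Ico m c) := by
    rw [Finset.disjoint_left]
    intro x hx hx'
    exact absurd (Finset.mem_Ico.mp hx').1 (not_le.mpr (Finset.mem_Ioo.mp hx).2)
  rw [tally_eq_sum, tally_eq_sum, tally_eq_sum, ← hu, Finset.sum_union hdisj, ← hins,
    Finset.sum_insert (by simp)]
  ring

lemma move_apply (f : F) (a b x : ℤ) (hba : b ≠ a) :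
    move f a b x = if x = b then true else if x = a then false else f x := by
  unfold move Function.update
  by_cases hb : x = b <;> by_cases ha : x = a <;> simp_all

lemma tally_move (f : F) {a b c c' : ℤ} (hba : b ≠ a) (hc : a ∉ Finset.Ioo c c')
    (hb : b ∉ Finset.Ioo c c') : tally (move f a b) c c' = tally f c c' := by
  rw [tally_eq_sum, tally_eq_sum]
  apply Finset.sum_congr rfl
  intro x hx
  rw [move_apply f a b x hba]
  have hxb : x ≠ b := fun h => hb (h ▸ hx)
  have hxa : x ≠ a := fun h => hc (h ▸ hx)
  simp [hxb, hxa]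

/-- `g` has a cap at `(b, a)` coming from a weight-zero legal move. -/
lemma hasCap_of_move (f g : F) (a b : ℤ) (h : LegalMove f g a b) (hw : tally f b a = 0) :
    HasCap g b a := by
  obtain ⟨⟨hba, hfa, hfb, hlegal⟩, hgm⟩ := h
  have hne : b ≠ a := hba.ne
  have htal : ∀ c, b < c → c ≤ a → tally g b c = tally f b c := by
    intro c hbc hca
    rw [hgm]
    apply tally_move f hne
    · simp only [Finset.mem_Ioo]; rintro ⟨_, h2⟩; exact absurd hca (not_le.mpr h2)
    · simp only [Finset.mem_Ioo]; rintro ⟨h1, _⟩; exact lt_irrefl b h1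
  refine ⟨hba, ?_, ?_, ?_, ?_⟩
  · rw [hgm, move_apply f a b b hne]; simp
  · rw [hgm, move_apply f a b a hne]; simp [hne.symm]
  · rw [htal a hba le_rfl]; exact hw
  · intro c hbc hca; rw [htal c hbc hca]; exact hlegal c hbc hca

/-- Two caps ending at the same point `a` have the same beginning. -/
lemma cap_unique (g : F) {a b₁ b₂ : ℤ} (h₁ : HasCap g b₁ a) (h₂ : HasCap g b₂ a) :
    b₁ = b₂ := by
  obtain ⟨hb₁a, hgb₁, hga, ht₁, hl₁⟩ := h₁
  obtain ⟨hb₂a, hgb₂, _, ht₂, hl₂⟩ := h₂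
  by_contra hne
  wlog hlt : b₁ < b₂ generalizing b₁ b₂
  · exact this hb₂a hgb₂ ht₂ hl₂ hb₁a hgb₁ ht₁ hl₁ (Ne.symm hne)
      (lt_of_le_of_ne (not_lt.mp hlt) (Ne.symm hne))
  have hsplit := tally_split g hlt hb₂a
  rw [ht₁, ht₂, hgb₂] at hsplit
  have := hl₁ b₂ hlt hb₂a.le
  simp at hsplit
  omega

/-- given `g` and `a`, there is at most one `f` such that `g` is obtained
from `f` by a legal move of weight zero starting at `a`. -/
theorem stmt5 (g : F) (hg : {x : ℤ | g x = true}.Finite) (a : ℤ)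
    (f₁ f₂ : F) (b₁ b₂ : ℤ)
    (h₁ : LegalMove f₁ g a b₁) (hw₁ : tally f₁ b₁ a = 0)
    (h₂ : LegalMove f₂ g a b₂) (hw₂ : tally f₂ b₂ a = 0) :
    f₁ = f₂ := by
  have hb : b₁ = b₂ :=
    cap_unique g (hasCap_of_move f₁ g a b₁ h₁ hw₁) (hasCap_of_move f₂ g a b₂ h₂ hw₂)
  subst hb
  obtain ⟨⟨hba₁, hfa₁, hfb₁, _⟩, hg₁⟩ := h₁
  obtain ⟨⟨_, hfa₂, hfb₂, _⟩, hg₂⟩ := h₂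
  funext x
  by_cases hxb : x = b₁
  · subst hxb; rw [hfb₁, hfb₂]
  by_cases hxa : x = a
  · subst hxa; rw [hfa₁, hfa₂]
  have e1 : g x = f₁ x := by rw [hg₁, move_apply f₁ a b₁ x hba₁.ne]; simp [hxb, hxa]
  have e2 : g x = f₂ x := by rw [hg₂, move_apply f₂ a b₁ x hba₁.ne]; simp [hxb, hxa]
  rw [← e1, ← e2]

end KacComb
end

section
/- For f ∈ F with f(a) = × and f(a−1) = ×, let h = f^a (delete the × at a, replacing it by ∘). Then there is no legal move from f of weight 0 starting at a, and for each i > 0, the set of b with f^a_b a legal move of weight i from f equals the set of b with h^{a−1}_b a legal move of weight i−1 from h. -/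
namespace KacComb

lemma tally_congr (f g : F) (b c : ℤ) (h : ∀ x ∈ Finset.Ioo b c, f x = g x) :
    tally f b c = tally g b c := by
  have h1 : (Finset.Ioo b c).filter (fun x => f x = true)
      = (Finset.Ioo b c).filter (fun x => g x = true) := by
    apply Finset.filter_congr; intro x hx; rw [h x hx]
  have h2 : (Finset.Ioo b c).filter (fun x => f x = false)
      = (Finset.Ioo b c).filter (fun x => g x = false) := by
    apply Finset.filter_congr; intro x hx; rw [h x hx]
  unfold tally
  rw [h1, h2]

lemma tally_update (f : F) (a b c : ℤ) (hc : c ≤ a) :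
    tally (Function.update f a false) b c = tally f b c := by
  apply tally_congr
  intro x hx
  simp only [Finset.mem_Ioo] at hx
  rw [Function.update_of_ne (by omega)]

lemma tally_step (f : F) (b a : ℤ) (h1 : b < a - 1) (h2 : f (a-1) = true) :
    tally f b a = tally f b (a-1) + 1 := by
  have hins : Finset.Ioo b a = insert (a-1) (Finset.Ioo b (a-1)) := by
    ext x; simp only [Finset.mem_Ioo, Finset.mem_insert]; omega
  have hnot : (a-1) ∉ Finset.Ioo b (a-1) := by simp
  unfold tally
  rw [hins, Finset.filter_insert, Finset.filter_insert]
  rw [if_pos h2, if_neg (by simp [h2]),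
    Finset.card_insert_of_notMem (fun hmem => hnot (Finset.mem_of_mem_filter _ hmem))]
  push_cast; ring

/-- suppose `f(a) = ×` and `f(a−1) = ×`, and let `h = f^a` be `f` with the
`×` at `a` deleted.  Then there is no weight-zero legal move from `f` starting at `a`,
and for `i > 0` the ends of legal moves of weight `i` from `f` starting at `a` are
exactly the ends of legal moves of weight `i−1` from `h` starting at `a−1`. -/
theorem stmt7 (f : F) (hf : {x : ℤ | f x = true}.Finite) (a : ℤ)
    (hx : f a = true) (hx' : f (a - 1) = true) :
    (∀ b : ℤ, IsLegal f a b → tally f b a ≠ 0) ∧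
    (∀ i : ℤ, 0 < i →
      {b : ℤ | IsLegal f a b ∧ tally f b a = i} =
        {b : ℤ | IsLegal (Function.update f a false) (a - 1) b ∧
          tally (Function.update f a false) b (a - 1) = i - 1}) := by
  have key : ∀ b, IsLegal f a b → b < a - 1 ∧ tally f b a = tally f b (a-1) + 1 ∧ 0 ≤ tally f b (a-1) := by
    intro b ⟨hba, _, hfb, htal⟩
    have hbne : b ≠ a - 1 := fun h => by rw [h, hx'] at hfb; exact absurd hfb (by simp)
    have hb1 : b < a - 1 := by omega
    exact ⟨hb1, tally_step f b a hb1 hx', htal (a-1) hb1 (by omega)⟩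
  constructor
  · intro b hl
    obtain ⟨hb1, hstep, hpos⟩ := key b hl
    omega
  · intro i hi
    ext b
    simp only [Set.mem_setOf_eq]
    constructor
    · rintro ⟨hl, hw⟩
      obtain ⟨hb1, hstep, hpos⟩ := key b hl
      obtain ⟨hba, _, hfb, htal⟩ := hl
      refine ⟨⟨hb1, ?_, ?_, ?_⟩, ?_⟩
      · rw [Function.update_of_ne (by omega), hx']
      · rw [Function.update_of_ne (by omega), hfb]
      · intro c hc1 hc2
        rw [tally_update f a b c (by omega)]
        exact htal c hc1 (by omega)
      · rw [tally_update f a b (a-1) (by omega)]; omega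
    · rintro ⟨⟨hb1, _, hfb, htal⟩, hw⟩
      rw [Function.update_of_ne (by omega)] at hfb
      rw [tally_update f a b (a-1) (by omega)] at hw
      have htal' : ∀ c : ℤ, b < c → c ≤ a - 1 → 0 ≤ tally f b c := by
        intro c hc1 hc2
        have := htal c hc1 hc2
        rwa [tally_update f a b c (by omega)] at this
      have hstep := tally_step f b a hb1 hx'
      refine ⟨⟨by omega, hx, hfb, ?_⟩, by omega⟩
      intro c hc1 hc2
      rcases eq_or_lt_of_le hc2 with h | h
      · subst h; omega
      · exact htal' c hc1 (by omega)


end KacComb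
end

section
/- For f ∈ F with finitely many ×'s, define |f| to be the sum of the elements of f⁻¹(×). If g is obtained from f by a legal move of weight zero, then |f| − |g| is odd. -/
namespace KacComb

/-- if `g` is obtained from `f` by a legal move of weight zero, then
`|f| − |g|` is odd, where `|f|` is the sum of the positions of the `×`'s of `f`. -/
theorem stmt9 (f g : F) (hf : {x : ℤ | f x = true}.Finite)
    (hg : {x : ℤ | g x = true}.Finite) (a b : ℤ)
    (h : LegalMove f g a b) (hw : tally f b a = 0) :
    Odd ((∑ x ∈ hf.toFinset, x) - (∑ x ∈ hg.toFinset, x)) := by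
  obtain ⟨⟨hba, hfa, hfb, _⟩, hgdef⟩ := h
  have hne : b ≠ a := ne_of_lt hba
  -- identify g's true set
  have hset : hg.toFinset = insert b (hf.toFinset.erase a) := by
    ext x
    simp only [Set.Finite.mem_toFinset, Set.mem_setOf_eq, Finset.mem_insert,
      Finset.mem_erase, hgdef, move, Function.update]
    by_cases hxb : x = b
    · subst hxb; simp
    · by_cases hxa : x = a
      · subst hxa; simp [hxb, hne.symm]
      · simp [hxb, hxa]
  have haf : a ∈ hf.toFinset := by simpa using hfa
  have hbE : b ∉ hf.toFinset.erase a := by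
    simp [Set.Finite.mem_toFinset, hfb]
  have hsum : (∑ x ∈ hg.toFinset, x) = b + ((∑ x ∈ hf.toFinset, x) - a) := by
    rw [hset, Finset.sum_insert hbE, Finset.sum_erase_eq_sub haf]
  rw [hsum]
  have hdiff : (∑ x ∈ hf.toFinset, x) - (b + ((∑ x ∈ hf.toFinset, x) - a)) = a - b := by
    ring
  rw [hdiff]
  -- parity from tally = 0
  have hcard : ((Finset.Ioo b a).filter fun x => f x = true).card
      + ((Finset.Ioo b a).filter fun x => f x = false).card = (Finset.Ioo b a).card := by
    have : ((Finset.Ioo b a).filter fun x => f x = false)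
        = ((Finset.Ioo b a).filter fun x => ¬ f x = true) := by
      apply Finset.filter_congr; intro x _; simp
    rw [this, Finset.card_filter_add_card_filter_not]
  have heq : ((Finset.Ioo b a).filter fun x => f x = true).card
      = ((Finset.Ioo b a).filter fun x => f x = false).card := by
    have := hw
    unfold tally at this
    omega
  have hIoo : ((Finset.Ioo b a).card : ℤ) = a - b - 1 := by
    rw [Int.card_Ioo]
    omega
  refine ⟨((Finset.Ioo b a).filter fun x => f x = false).card, ?_⟩
  omega

end KacComb
end
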